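/- Let Γ = ⟨S⟩ be a finitely generated group with a measure-preserving action ρ on a probability space (X,ν), where S is finite, symmetric, and contains the identity. If ρ is not expanding in measure, then the induced isometric action of Γ on L^p_0(X) (1 ≤ p < ∞) has almost invariant vectors: there is a sequence f_n ∈ L^p_0(X)∖{0} with ‖s·f_n − f_n‖_p / ‖f_n‖_p → 0 for every s ∈ S. -/

import Mathlib

open MeasureTheory Pointwise Filter ENNReal symmDiff

/-- If a measure-preserving action of `Γ = ⟨S⟩` on a probability space is not expanding in
measure, then the induced isometric action on `L^p_0(X)` (`1 ≤ p < ∞`) has almost invariant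
vectors: there is a sequence of nonzero zero-average `L^p` functions `f n` with
`‖s·f n − f n‖_p / ‖f n‖_p → 0` for every `s ∈ S`. -/
theorem not_expanding_implies_almost_invariant_vectors
    {Γ X : Type*} [Group Γ] [MulAction Γ X] [MeasurableSpace X]
    (ν : Measure X) [IsProbabilityMeasure ν]
    (hmp : ∀ g : Γ, MeasurePreserving (fun x => g • x) ν ν)
    (S : Finset Γ) (hS1 : (1 : Γ) ∈ S) (hSsymm : ∀ s ∈ S, s⁻¹ ∈ S)
    (p : ℝ) (hp : 1 ≤ p)
    (hnotexp : ¬ ∃ α : ℝ, 0 < α ∧ ∀ A : Set X, MeasurableSet A → ν A ≤ 1 / 2 →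
      ENNReal.ofReal (1 + α) * ν A ≤ ν (⋃ s ∈ S, s • A)) :
    ∃ f : ℕ → X → ℝ,
      (∀ n, MemLp (f n) (ENNReal.ofReal p) ν) ∧
      (∀ n, ∫ x, f n x ∂ν = 0) ∧
      (∀ n, eLpNorm (f n) (ENNReal.ofReal p) ν ≠ 0) ∧
      (∀ s ∈ S, Tendsto
        (fun n => eLpNorm (fun x => f n (s⁻¹ • x) - f n x) (ENNReal.ofReal p) ν
          / eLpNorm (f n) (ENNReal.ofReal p) ν) atTop (nhds 0)) := by
  classical
  have hp0 : 0 < p := lt_of_lt_of_le one_pos hp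
  set q : ℝ≥0∞ := ENNReal.ofReal p with hqdef
  have hq0 : q ≠ 0 := by
    simp only [hqdef, ne_eq, ENNReal.ofReal_eq_zero, not_le]
    exact hp0
  have hqtop : q ≠ ⊤ := ENNReal.ofReal_ne_top
  have hqreal : q.toReal = p := ENNReal.toReal_ofReal hp0.le
  push_neg at hnotexp
  have key : ∀ n : ℕ, ∃ A : Set X, MeasurableSet A ∧ ν A ≤ 1/2 ∧
      ν (⋃ s ∈ S, s • A) < ENNReal.ofReal (1 + ((n : ℝ) + 1)⁻¹) * ν A := by
    intro n
    obtain ⟨A, h1, h2, h3⟩ := hnotexp (((n : ℝ) + 1)⁻¹) (by positivity)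
    exact ⟨A, h1, h2, h3⟩
  choose A hAm hA2 hAlt using key
  -- basic facts about the sets
  have hsmul_preimage : ∀ (g : Γ) (B : Set X), g • B = (fun x => g⁻¹ • x) ⁻¹' B := by
    intro g B
    ext x
    simp [Set.mem_smul_set_iff_inv_smul_mem, Set.mem_preimage]
  have hmeas_smul : ∀ (g : Γ) {B : Set X}, MeasurableSet B → MeasurableSet (g • B) := by
    intro g B hB
    rw [hsmul_preimage]
    exact (hmp g⁻¹).measurable hB
  have hν_smul : ∀ (g : Γ) {B : Set X}, MeasurableSet B → ν (g • B) = ν B := by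
    intro g B hB
    rw [hsmul_preimage]
    exact (hmp g⁻¹).measure_preimage hB.nullMeasurableSet
  have hAfin : ∀ n, ν (A n) ≠ ⊤ := fun n => measure_ne_top ν _
  have hApos : ∀ n, 0 < ν (A n) := by
    intro n
    rcases eq_zero_or_pos (ν (A n)) with h | h
    · exfalso
      have := hAlt n
      rw [h, mul_zero] at this
      simp at this
    · exact h
  have haLe : ∀ n, (ν (A n)).toReal ≤ 1/2 := by
    intro n
    have := ENNReal.toReal_mono (by norm_num : (1/2 : ℝ≥0∞) ≠ ⊤) (hA2 n)
    simpa using this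
  -- the almost invariant functions
  set f : ℕ → X → ℝ := fun n x => (A n).indicator (fun _ => (1:ℝ)) x - (ν (A n)).toReal
    with hfdef
  have hmem : ∀ n, MemLp (f n) q ν :=
    fun n => (memLp_indicator_const q (hAm n) (1:ℝ) (Or.inr (hAfin n))).sub (memLp_const _)
  refine ⟨f, hmem, ?_, ?_, ?_⟩
  · -- zero average
    intro n
    have h1 : Integrable ((A n).indicator (fun _ => (1:ℝ))) ν :=
      (memLp_indicator_const 1 (hAm n) (1:ℝ) (Or.inr (hAfin n))).integrable le_rfl
    simp only [hfdef]
    rw [integral_sub h1 (integrable_const _), integral_indicator_const _ (hAm n),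
      integral_const]
    simp [Measure.real]
  · -- nonzero
    intro n h
    rw [eLpNorm_eq_zero_iff (hmem n).aestronglyMeasurable hq0] at h
    have hsub : A n ⊆ {x | ¬ f n x = 0} := by
      intro x hx
      simp only [hfdef, Set.indicator_of_mem hx, Set.mem_setOf_eq]
      intro hzero
      have h1 : (ν (A n)).toReal = 1 := by linarith
      linarith [haLe n]
    have hnull : ν (A n) = 0 := measure_mono_null hsub (ae_iff.1 h)
    exact (hApos n).ne' hnull
  · -- almost invariance
    intro s hs
    have hbound : ∀ n, eLpNorm (fun x => f n (s⁻¹ • x) - f n x) q ν / eLpNorm (f n) q ν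
        ≤ 2 * (2 * ENNReal.ofReal ((n : ℝ) + 1)⁻¹) ^ (1/p) := by
      intro n
      set a : ℝ≥0∞ := ν (A n) with hadef
      set e : ℝ≥0∞ := ENNReal.ofReal ((n : ℝ) + 1)⁻¹ with hedef
      set B : Set X := s • A n with hBdef
      have hBm : MeasurableSet B := hmeas_smul s (hAm n)
      have hνB : ν B = a := hν_smul s (hAm n)
      have hAU : A n ⊆ ⋃ g ∈ S, g • A n := by
        have h1 : (1 : Γ) • A n ⊆ ⋃ g ∈ S, g • A n := fun x hx => Set.mem_biUnion hS1 hx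
        simpa using h1
      have hBU : B ⊆ ⋃ g ∈ S, g • A n := fun x hx => Set.mem_biUnion hs hx
      have hUlt : ν (⋃ g ∈ S, g • A n) < a + e * a := by
        have h1 := hAlt n
        rwa [ENNReal.ofReal_add (by norm_num) (by positivity), ENNReal.ofReal_one,
          add_mul, one_mul] at h1
      have hdiffA : ν ((⋃ g ∈ S, g • A n) \ A n) ≤ e * a := by
        rw [measure_diff hAU (hAm n).nullMeasurableSet (hAfin n)]
        exact tsub_le_iff_left.2 hUlt.le
      have hdiffB : ν ((⋃ g ∈ S, g • A n) \ B) ≤ e * a := by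
        rw [measure_diff hBU hBm.nullMeasurableSet (by rw [hνB]; exact hAfin n), hνB]
        exact tsub_le_iff_left.2 hUlt.le
      have hsymm : ν (B ∆ A n) ≤ 2 * e * a := by
        have hsub : B ∆ A n ⊆ ((⋃ g ∈ S, g • A n) \ A n) ∪ ((⋃ g ∈ S, g • A n) \ B) := by
          intro x hx
          rcases Set.mem_symmDiff.1 hx with ⟨h1, h2⟩ | ⟨h1, h2⟩
          · exact Or.inl ⟨hBU h1, h2⟩
          · exact Or.inr ⟨hAU h1, h2⟩
        calc ν (B ∆ A n) ≤ ν (((⋃ g ∈ S, g • A n) \ A n) ∪ ((⋃ g ∈ S, g • A n) \ B)) :=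
              measure_mono hsub
          _ ≤ ν ((⋃ g ∈ S, g • A n) \ A n) + ν ((⋃ g ∈ S, g • A n) \ B) := measure_union_le _ _
          _ ≤ e * a + e * a := add_le_add hdiffA hdiffB
          _ = 2 * e * a := by ring
      have hsmB : MeasurableSet (B ∆ A n) := by
        rw [Set.symmDiff_def]
        exact (hBm.diff (hAm n)).union ((hAm n).diff hBm)
      -- numerator bound
      have hnum : eLpNorm (fun x => f n (s⁻¹ • x) - f n x) q ν
          ≤ (2 * e) ^ (1/p) * a ^ (1/p) := by
        have hptw : ∀ x, ‖f n (s⁻¹ • x) - f n x‖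
            ≤ ‖(B ∆ A n).indicator (fun _ => (1:ℝ)) x‖ := by
          intro x
          have hmemB : x ∈ B ↔ s⁻¹ • x ∈ A n := Set.mem_smul_set_iff_inv_smul_mem
          by_cases hxB : x ∈ B <;> by_cases hxA : x ∈ A n
          · simp only [hfdef, Set.indicator_of_mem (hmemB.1 hxB), Set.indicator_of_mem hxA]
            simp [norm_nonneg]
          · have hxs : x ∈ B ∆ A n := Set.mem_symmDiff.2 (Or.inl ⟨hxB, hxA⟩)
            simp only [hfdef, Set.indicator_of_mem (hmemB.1 hxB),
              Set.indicator_of_notMem hxA, Set.indicator_of_mem hxs]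
            simp
          · have hxs : x ∈ B ∆ A n := Set.mem_symmDiff.2 (Or.inr ⟨hxA, hxB⟩)
            have hni : s⁻¹ • x ∉ A n := fun h => hxB (hmemB.2 h)
            simp only [hfdef, Set.indicator_of_notMem hni, Set.indicator_of_mem hxA,
              Set.indicator_of_mem hxs]
            simp
            rw [show -(ν (A n)).toReal - (1 - (ν (A n)).toReal) = -1 by ring]
            simp
          · have hni : s⁻¹ • x ∉ A n := fun h => hxB (hmemB.2 h)
            simp only [hfdef, Set.indicator_of_notMem hni, Set.indicator_of_notMem hxA]
            simp [norm_nonneg]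
        calc eLpNorm (fun x => f n (s⁻¹ • x) - f n x) q ν
            ≤ eLpNorm ((B ∆ A n).indicator (fun _ => (1:ℝ))) q ν := eLpNorm_mono hptw
          _ = ‖(1:ℝ)‖₊ * ν (B ∆ A n) ^ (1/q.toReal) := eLpNorm_indicator_const hsmB hq0 hqtop
          _ ≤ (2 * e * a) ^ (1/p) := by
              rw [hqreal]
              simpa using ENNReal.rpow_le_rpow hsymm (by positivity : (0:ℝ) ≤ 1/p)
          _ = (2 * e) ^ (1/p) * a ^ (1/p) := ENNReal.mul_rpow_of_nonneg _ _ (by positivity)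
      -- denominator bound
      have hden : (2 : ℝ≥0∞)⁻¹ * a ^ (1/p) ≤ eLpNorm (f n) q ν := by
        have hptw : ∀ x, ‖(A n).indicator (fun _ => (2:ℝ)⁻¹) x‖ ≤ ‖f n x‖ := by
          intro x
          by_cases hxA : x ∈ A n
          · simp only [hfdef, Set.indicator_of_mem hxA]
            rw [Real.norm_eq_abs, Real.norm_eq_abs, abs_of_nonneg (by norm_num),
              abs_of_nonneg (by linarith [haLe n])]
            linarith [haLe n]
          · simp [hfdef, Set.indicator_of_notMem hxA]
        have hle := eLpNorm_mono (p := q) (μ := ν) hptw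
        rw [eLpNorm_indicator_const (hAm n) hq0 hqtop, hqreal] at hle
        refine le_trans (le_of_eq ?_) hle
        congr 1
        rw [Real.enorm_eq_ofReal (by norm_num), ENNReal.ofReal_inv_of_pos (by norm_num)]
        simp
      -- combine
      have hcomb : eLpNorm (fun x => f n (s⁻¹ • x) - f n x) q ν
          ≤ (2 * (2 * e) ^ (1/p)) * eLpNorm (f n) q ν := by
        have h2 : (2 : ℝ≥0∞) * 2⁻¹ = 1 := ENNReal.mul_inv_cancel (by norm_num) (by norm_num)
        calc eLpNorm (fun x => f n (s⁻¹ • x) - f n x) q ν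
            ≤ (2 * e) ^ (1/p) * a ^ (1/p) := hnum
          _ = ((2:ℝ≥0∞) * 2⁻¹) * ((2 * e) ^ (1/p) * a ^ (1/p)) := by rw [h2, one_mul]
          _ = (2 * (2 * e) ^ (1/p)) * ((2:ℝ≥0∞)⁻¹ * a ^ (1/p)) := by ring
          _ ≤ (2 * (2 * e) ^ (1/p)) * eLpNorm (f n) q ν := mul_le_mul_right hden _
      exact ENNReal.div_le_of_le_mul hcomb
    -- the bound tends to zero
    have hg : Tendsto (fun n : ℕ => 2 * (2 * ENNReal.ofReal ((n : ℝ) + 1)⁻¹) ^ (1/p))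
        atTop (nhds 0) := by
      have h0 : Tendsto (fun n : ℕ => ENNReal.ofReal ((n : ℝ) + 1)⁻¹) atTop (nhds 0) := by
        rw [← ENNReal.ofReal_zero]
        apply ENNReal.tendsto_ofReal
        simpa [one_div] using (tendsto_one_div_add_atTop_nhds_zero_nat :
          Tendsto (fun n : ℕ => 1 / ((n : ℝ) + 1)) atTop (nhds 0))
      have h1 : Tendsto (fun n : ℕ => 2 * ENNReal.ofReal ((n : ℝ) + 1)⁻¹) atTop (nhds 0) := by
        simpa using ENNReal.Tendsto.const_mul h0 (Or.inr (by norm_num : (2:ℝ≥0∞) ≠ ⊤))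
      have h2 := h1.ennrpow_const (1/p)
      rw [ENNReal.zero_rpow_of_pos (by positivity)] at h2
      simpa using ENNReal.Tendsto.const_mul h2 (Or.inr (by norm_num : (2:ℝ≥0∞) ≠ ⊤))
    exact tendsto_of_tendsto_of_tendsto_of_le_of_le tendsto_const_nhds hg
      (fun n => zero_le) hbound
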